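/- Let C be an algebraically ordered compact cone satisfying Riesz refinement. Then the set C* of linear maps C → [0,∞] is lattice ordered, and for f, g ∈ C* the infimum is given by the Riesz–Kantorovich formula (f ∧ g)(a) = inf { f(a₁) + g(a₂) : a = a₁ + a₂ }. -/

import Mathlib

open scoped ENNReal
open Filter Topology

namespace ConeFormal

variable {C : Type*} [AddCommMonoid C] [TopologicalSpace C]

/-- The algebraic (pre)order on a cone: `a ≤ b` iff `a + c = b` for some `c`. -/
def ALE (a b : C) : Prop := ∃ c : C, a + c = b

/-- `σ` is a scalar multiplication by `(0,∞)` making `C` a topological cone: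
addition and scalar multiplication are (jointly) continuous, and the cone axioms hold
for strictly positive scalars. -/
def IsTopCone (σ : ℝ → C → C) : Prop :=
  ContinuousAdd C ∧
  ContinuousOn (fun p : ℝ × C => σ p.1 p.2) {p : ℝ × C | 0 < p.1} ∧
  (∀ s t : ℝ, 0 < s → 0 < t → ∀ a : C, σ (s * t) a = σ s (σ t a)) ∧
  (∀ a : C, σ 1 a = a) ∧
  (∀ t : ℝ, 0 < t → ∀ a b : C, σ t (a + b) = σ t a + σ t b) ∧
  (∀ s t : ℝ, 0 < s → 0 < t → ∀ a : C, σ (s + t) a = σ s a + σ t a)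

/-- `C` is algebraically ordered: the algebraic preorder is antisymmetric. -/
def AlgOrdered (C : Type*) [AddCommMonoid C] [TopologicalSpace C] : Prop :=
  ∀ a b : C, ALE a b → ALE b a → a = b

/-- Riesz refinement. -/
def RieszRefine (C : Type*) [AddCommMonoid C] : Prop :=
  ∀ a₁ a₂ b₁ b₂ : C, a₁ + a₂ = b₁ + b₂ →
    ∃ x₁₁ x₁₂ x₂₁ x₂₂ : C, a₁ = x₁₁ + x₁₂ ∧ a₂ = x₂₁ + x₂₂ ∧
      b₁ = x₁₁ + x₂₁ ∧ b₂ = x₁₂ + x₂₂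

/-- A linear map `C → [0,∞]`. -/
def IsLinMap (σ : ℝ → C → C) (f : C → ℝ≥0∞) : Prop :=
  f 0 = 0 ∧ (∀ a b : C, f (a + b) = f a + f b) ∧
  ∀ t : ℝ, 0 < t → ∀ a : C, f (σ t a) = ENNReal.ofReal t * f a

/-- The Riesz–Kantorovich infimum formula. -/
noncomputable def RKinf (f g : C → ℝ≥0∞) (a : C) : ℝ≥0∞ :=
  sInf {t : ℝ≥0∞ | ∃ a₁ a₂ : C, a = a₁ + a₂ ∧ t = f a₁ + g a₂}

/-- The Riesz–Kantorovich supremum formula. -/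
noncomputable def RKsup (f g : C → ℝ≥0∞) (a : C) : ℝ≥0∞ :=
  sSup {t : ℝ≥0∞ | ∃ a₁ a₂ : C, a = a₁ + a₂ ∧ t = f a₁ + g a₂}

/-- Lower semicontinuity of `f : C → [0,∞]`: `{a : f a ≤ t}` is closed for every
`t ∈ [0,∞)`. -/
def IsLSCMap (f : C → ℝ≥0∞) : Prop :=
  ∀ t : ℝ≥0∞, t ≠ ∞ → IsClosed {a : C | f a ≤ t}

/-- `C` is inf-semilattice ordered (w.r.t. the algebraic order), with infimum
operation `inf` over which addition distributes. -/
def InfSemilatticeOrdered (inf : C → C → C) : Prop :=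
  (∀ a b : C, ALE (inf a b) a ∧ ALE (inf a b) b ∧
    ∀ z : C, ALE z a → ALE z b → ALE z (inf a b)) ∧
  (∀ a b c : C, a + inf b c = inf (a + b) (a + c))


/-- if `C` is an algebraically ordered compact cone with Riesz
refinement, then the linear maps `C → [0,∞]` form a lattice in the pointwise order,
with infimum given by the Riesz–Kantorovich formula. -/
theorem stmt2 {C : Type*} [AddCommMonoid C] [TopologicalSpace C] [CompactSpace C]
    (σ : ℝ → C → C) (hcone : IsTopCone σ) (halg : AlgOrdered C)
    (hRR : RieszRefine C)
    (f g : C → ℝ≥0∞) (hf : IsLinMap σ f) (hg : IsLinMap σ g) :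
    (IsLinMap σ (RKinf f g) ∧
      (∀ a : C, RKinf f g a ≤ f a) ∧ (∀ a : C, RKinf f g a ≤ g a) ∧
      (∀ h : C → ℝ≥0∞, IsLinMap σ h → (∀ a : C, h a ≤ f a) → (∀ a : C, h a ≤ g a) →
        ∀ a : C, h a ≤ RKinf f g a)) ∧
    (∃ k : C → ℝ≥0∞, IsLinMap σ k ∧
      (∀ a : C, f a ≤ k a) ∧ (∀ a : C, g a ≤ k a) ∧
      (∀ h : C → ℝ≥0∞, IsLinMap σ h → (∀ a : C, f a ≤ h a) → (∀ a : C, g a ≤ h a) →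
        ∀ a : C, k a ≤ h a)) := by

  obtain ⟨-, -, hmulσ, honeσ, hdistσ, -⟩ := hcone
  obtain ⟨hf0, hfadd, hfs⟩ := hf
  obtain ⟨hg0, hgadd, hgs⟩ := hg
  set S : C → Set ℝ≥0∞ := fun a => {t | ∃ a₁ a₂ : C, a = a₁ + a₂ ∧ t = f a₁ + g a₂}
    with hSdef
  have hRKi : ∀ a : C, RKinf f g a = sInf (S a) := fun a => rfl
  have hRKs : ∀ a : C, RKsup f g a = sSup (S a) := fun a => rfl
  have hne : ∀ a : C, (S a).Nonempty :=
    fun a => ⟨f a + g 0, a, 0, (add_zero a).symm, rfl⟩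
  have hinv : ∀ t : ℝ, 0 < t → ∀ b : C, σ t (σ t⁻¹ b) = b := fun t ht b => by
    rw [← hmulσ t t⁻¹ ht (by positivity), mul_inv_cancel₀ ht.ne', honeσ]
  -- scaling identity for the decomposition sets
  have hSscale : ∀ t : ℝ, 0 < t → ∀ a : C,
      S (σ t a) = (fun x => ENNReal.ofReal t * x) '' S a := by
    intro t ht a
    ext x
    constructor
    · rintro ⟨a₁, a₂, hd, rfl⟩
      refine ⟨f (σ t⁻¹ a₁) + g (σ t⁻¹ a₂), ⟨σ t⁻¹ a₁, σ t⁻¹ a₂, ?_, rfl⟩, ?_⟩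
      · have ha : a = σ t⁻¹ (σ t a) := by
          rw [← hmulσ t⁻¹ t (by positivity) ht, inv_mul_cancel₀ ht.ne', honeσ]
        rw [ha, hd, hdistσ t⁻¹ (by positivity)]
      · simp only [mul_add, ← hfs t ht, ← hgs t ht, hinv t ht]
    · rintro ⟨y, ⟨a₁, a₂, rfl, rfl⟩, rfl⟩
      exact ⟨σ t a₁, σ t a₂, hdistσ t ht a₁ a₂, by
        dsimp only; rw [mul_add, hfs t ht, hgs t ht]⟩
  constructor
  · -- the infimum part
    have hlef : ∀ a : C, RKinf f g a ≤ f a := fun a =>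
      sInf_le ⟨a, 0, (add_zero a).symm, by rw [hg0, add_zero]⟩
    have hleg : ∀ a : C, RKinf f g a ≤ g a := fun a =>
      sInf_le ⟨0, a, (zero_add a).symm, by rw [hf0, zero_add]⟩
    have hizero : RKinf f g 0 = 0 :=
      le_antisymm ((hlef 0).trans_eq hf0) zero_le
    have hiadd : ∀ a b : C, RKinf f g (a + b) = RKinf f g a + RKinf f g b := by
      intro a b
      apply le_antisymm
      · have hrw : RKinf f g a + RKinf f g b
            = ⨅ x : S a, ⨅ y : S b, (x : ℝ≥0∞) + y := by
          rw [hRKi, hRKi, sInf_eq_iInf', ENNReal.iInf_add]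
          exact iInf_congr fun x => by rw [sInf_eq_iInf', ENNReal.add_iInf]
        rw [hrw]
        refine le_iInf fun x => le_iInf fun y => ?_
        obtain ⟨a₁, a₂, ha, hx⟩ := x.2
        obtain ⟨b₁, b₂, hb, hy⟩ := y.2
        refine (sInf_le (show f (a₁ + b₁) + g (a₂ + b₂) ∈ S (a + b) from
          ⟨a₁ + b₁, a₂ + b₂, by rw [ha, hb]; abel, rfl⟩)).trans ?_
        rw [hx, hy, hfadd, hgadd]
        exact le_of_eq (by ring)
      · refine le_sInf ?_
        rintro x ⟨c₁, c₂, hc, rfl⟩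
        obtain ⟨x₁₁, x₁₂, x₂₁, x₂₂, ha, hb, hc₁, hc₂⟩ := hRR a b c₁ c₂ hc
        calc RKinf f g a + RKinf f g b
            ≤ (f x₁₁ + g x₁₂) + (f x₂₁ + g x₂₂) :=
              add_le_add (sInf_le ⟨x₁₁, x₁₂, ha, rfl⟩) (sInf_le ⟨x₂₁, x₂₂, hb, rfl⟩)
          _ = f c₁ + g c₂ := by rw [hc₁, hc₂, hfadd, hgadd]; ring
    have hiscale : ∀ t : ℝ, 0 < t → ∀ a : C,
        RKinf f g (σ t a) = ENNReal.ofReal t * RKinf f g a := by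
      intro t ht a
      rw [hRKi, hRKi, hSscale t ht a, sInf_image', sInf_eq_iInf',
        ENNReal.mul_iInf_of_ne (ENNReal.ofReal_pos.2 ht).ne' ENNReal.ofReal_ne_top]
    refine ⟨⟨hizero, hiadd, hiscale⟩, hlef, hleg, ?_⟩
    intro h hh hhf hhg a
    refine le_sInf ?_
    rintro x ⟨a₁, a₂, rfl, rfl⟩
    rw [hh.2.1]
    exact add_le_add (hhf a₁) (hhg a₂)
  · -- the supremum part
    refine ⟨RKsup f g, ⟨?_, ?_, ?_⟩, ?_, ?_, ?_⟩
    · -- k 0 = 0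
      refine le_antisymm (sSup_le ?_) zero_le
      rintro x ⟨a₁, a₂, h0, rfl⟩
      have hfa : f a₁ + f a₂ = 0 := by rw [← hfadd, ← h0, hf0]
      have hga : g a₁ + g a₂ = 0 := by rw [← hgadd, ← h0, hg0]
      rw [(add_eq_zero.1 hfa).1, (add_eq_zero.1 hga).2, add_zero]
    · -- additivity
      intro a b
      haveI := (hne a).to_subtype
      haveI := (hne b).to_subtype
      apply le_antisymm
      · refine sSup_le ?_
        rintro x ⟨c₁, c₂, hc, rfl⟩
        obtain ⟨x₁₁, x₁₂, x₂₁, x₂₂, ha, hb, hc₁, hc₂⟩ := hRR a b c₁ c₂ hc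
        calc f c₁ + g c₂ = (f x₁₁ + g x₁₂) + (f x₂₁ + g x₂₂) := by
              rw [hc₁, hc₂, hfadd, hgadd]; ring
          _ ≤ RKsup f g a + RKsup f g b :=
              add_le_add (le_sSup ⟨x₁₁, x₁₂, ha, rfl⟩) (le_sSup ⟨x₂₁, x₂₂, hb, rfl⟩)
      · have hrw : RKsup f g a + RKsup f g b
            = ⨆ x : S a, ⨆ y : S b, (x : ℝ≥0∞) + y := by
          rw [hRKs, hRKs, sSup_eq_iSup', ENNReal.iSup_add]
          exact iSup_congr fun x => by rw [sSup_eq_iSup', ENNReal.add_iSup]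
        rw [hrw]
        refine iSup_le fun x => iSup_le fun y => ?_
        obtain ⟨a₁, a₂, ha, hx⟩ := x.2
        obtain ⟨b₁, b₂, hb, hy⟩ := y.2
        refine le_trans ?_ (le_sSup (show f (a₁ + b₁) + g (a₂ + b₂) ∈ S (a + b) from
          ⟨a₁ + b₁, a₂ + b₂, by rw [ha, hb]; abel, rfl⟩))
        rw [hx, hy, hfadd, hgadd]
        exact le_of_eq (by ring)
    · -- homogeneity
      intro t ht a
      rw [hRKs, hRKs, hSscale t ht a, sSup_image', sSup_eq_iSup', ENNReal.mul_iSup]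
    · exact fun a => le_sSup ⟨a, 0, (add_zero a).symm, by rw [hg0, add_zero]⟩
    · exact fun a => le_sSup ⟨0, a, (zero_add a).symm, by rw [hf0, zero_add]⟩
    · intro h hh hhf hhg a
      refine sSup_le ?_
      rintro x ⟨a₁, a₂, rfl, rfl⟩
      rw [hh.2.1]
      exact add_le_add (hhf a₁) (hhg a₂)


end ConeFormal
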